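/- arXiv:1105.0160 — 2 statements merged into one kernel-verified Lean document; each statement's English description precedes it below -/
import Mathlib

section
/- (Lemma: i★χ ≡ χ for generic diagonal entries) Let χ be a bi-homomorphism on Π with all c^χ_{ij} finite, and let i ∈ I with χ(α_i,α_i) not a root of unity. Then i★χ ≡ χ, i.e. (i★χ)(α_j,α_j) = χ(α_j,α_j) for all j, and (i★χ)(α_j,α_k)·(i★χ)(α_k,α_j) = χ(α_j,α_k)χ(α_k,α_j) for all j, k. -/
/-- `ℤΠ`, the free `ℤ`-module with basis `Π = {α_1,…,α_N}`. -/
abbrev Mz (N : ℕ) := Fin N →₀ ℤ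

/-- The simple "root" `α_i`, the `i`-th basis element of `ℤΠ`. -/
noncomputable def alphav {N : ℕ} (i : Fin N) : Mz N := Finsupp.single i 1

/-- A bi-homomorphism `χ : ℤΠ × ℤΠ → ℂ*`. -/
def IsBihom {N : ℕ} (χ : Mz N → Mz N → ℂˣ) : Prop :=
  (∀ a b c : Mz N, χ a (b + c) = χ a b * χ a c) ∧
  (∀ a b c : Mz N, χ (a + b) c = χ a c * χ b c)

/-- `(m)_t := 1 + t + ⋯ + t^{m-1}`. -/
noncomputable def qnum (m : ℕ) (t : ℂ) : ℂ := ∑ j ∈ Finset.range m, t ^ j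

/-- `(m)_t! := ∏_{j=1}^m (j)_t`. -/
noncomputable def qfact (m : ℕ) (t : ℂ) : ℂ := ∏ j ∈ Finset.range m, qnum (j + 1) t

/-- `(m; t₁, t₂)! := ∏_{j=1}^m (1 - t₁^{j-1} t₂)`. -/
noncomputable def tfact (m : ℕ) (t₁ t₂ : ℂ) : ℂ := ∏ j ∈ Finset.range m, (1 - t₁ ^ j * t₂)

/-- The Cartan entry `c` (off-diagonal part) attached to `q = q_{ii}` and `r = q_{ij}q_{ji}`:
`⊥` (i.e. `-∞`) if `(m)_q!(m;q,r)! ≠ 0` for all `m`, and otherwise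
`-Max{m ∈ ℤ≥0 | (m)_q!(m;q,r)! ≠ 0}`. -/
noncomputable def cEntry (q r : ℂ) : WithBot ℤ :=
  letI := Classical.propDecidable
  if ∀ m : ℕ, qfact m q * tfact m q r ≠ 0 then ⊥
  else ((-((sSup {m : ℕ | qfact m q * tfact m q r ≠ 0} : ℕ) : ℤ) : ℤ) : WithBot ℤ)

/-- The generalized Cartan matrix `c^χ_{ij}` of a bi-homomorphism `χ`. -/
noncomputable def cMat {N : ℕ} (χ : Mz N → Mz N → ℂˣ) (i j : Fin N) : WithBot ℤ :=
  if i = j then 2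
  else cEntry (χ (alphav i) (alphav i))
    ((χ (alphav i) (alphav j) : ℂ) * (χ (alphav j) (alphav i) : ℂ))

/-- `c^χ_{ij}` as an integer (junk value `0` in the `-∞` case). -/
noncomputable def cInt {N : ℕ} (χ : Mz N → Mz N → ℂˣ) (i j : Fin N) : ℤ :=
  WithBot.unbotD 0 (cMat χ i j)

/-- The reflection `s^χ_i ∈ Aut_ℤ(ℤΠ)`, `s^χ_i(α_j) = α_j - c^χ_{ij} α_i`,
extended `ℤ`-linearly. -/
noncomputable def sMap {N : ℕ} (χ : Mz N → Mz N → ℂˣ) (i : Fin N) (v : Mz N) : Mz N :=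
  v - (v.sum fun j n => n * cInt χ i j) • alphav i

/-- The Lusztig twist `i★χ`, `(i★χ)(α,β) := χ(s^χ_i α, s^χ_i β)`. -/
noncomputable def starB {N : ℕ} (i : Fin N) (χ : Mz N → Mz N → ℂˣ) :
    Mz N → Mz N → ℂˣ :=
  fun a b => χ (sMap χ i a) (sMap χ i b)

section Aux

variable {N : ℕ} {χ : Mz N → Mz N → ℂˣ}

lemma chi_zero_right (hχ : IsBihom χ) (a : Mz N) : χ a 0 = 1 := by
  have h := hχ.1 a 0 0
  rw [add_zero] at h
  exact (left_eq_mul.mp h)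

lemma chi_zero_left (hχ : IsBihom χ) (a : Mz N) : χ 0 a = 1 := by
  have h := hχ.2 0 0 a
  rw [add_zero] at h
  exact (left_eq_mul.mp h)

/-- `χ a ·` as a monoid hom. -/
noncomputable def rHom (hχ : IsBihom χ) (a : Mz N) : Multiplicative (Mz N) →* ℂˣ where
  toFun b := χ a b.toAdd
  map_one' := chi_zero_right hχ a
  map_mul' _ _ := hχ.1 a _ _

/-- `χ · a` as a monoid hom. -/
noncomputable def lHom (hχ : IsBihom χ) (a : Mz N) : Multiplicative (Mz N) →* ℂˣ where
  toFun b := χ b.toAdd a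
  map_one' := chi_zero_left hχ a
  map_mul' _ _ := hχ.2 _ _ a

lemma chi_zsmul_right (hχ : IsBihom χ) (a b : Mz N) (n : ℤ) : χ a (n • b) = χ a b ^ n := by
  have := map_zpow (rHom hχ a) (Multiplicative.ofAdd b) n
  simpa [rHom] using this

lemma chi_zsmul_left (hχ : IsBihom χ) (a b : Mz N) (n : ℤ) : χ (n • b) a = χ b a ^ n := by
  have := map_zpow (lHom hχ a) (Multiplicative.ofAdd b) n
  simpa [lHom] using this

lemma chi_expand (hχ : IsBihom χ) (a b u v : Mz N) (c d : ℤ) :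
    (χ (a - c • u) (b - d • v) : ℂ) =
      χ a b * (χ a v : ℂ) ^ (-d) * (χ u b : ℂ) ^ (-c) * (χ u v : ℂ) ^ (c * d) := by
  rw [sub_eq_add_neg, ← neg_smul, sub_eq_add_neg, ← neg_smul]
  rw [hχ.2, hχ.1, hχ.1, chi_zsmul_left hχ, chi_zsmul_right hχ, chi_zsmul_right hχ,
    chi_zsmul_left hχ]
  push_cast
  rw [← zpow_mul]
  ring

lemma pow_inj_of_nonroot {q : ℂ} (hq0 : q ≠ 0) (hq : ∀ m : ℕ, 0 < m → q ^ m ≠ 1) :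
    ∀ a b : ℕ, q ^ a = q ^ b → a = b := by
  have key : ∀ a b : ℕ, a ≤ b → q ^ a = q ^ b → a = b := by
    intro a b hab h
    have h2 : q ^ a * 1 = q ^ a * q ^ (b - a) := by
      rw [mul_one, ← pow_add, Nat.add_sub_cancel' hab, h]
    have h3 : q ^ (b - a) = 1 := (mul_left_cancel₀ (pow_ne_zero a hq0) h2).symm
    have : b - a = 0 := by
      by_contra hba
      exact hq _ (Nat.pos_of_ne_zero hba) h3
    omega
  intro a b h
  rcases le_total a b with hab | hab
  · exact key a b hab h
  · exact (key b a hab h.symm).symm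

lemma cEntry_key {q r : ℂ} (hq0 : q ≠ 0) (hq : ∀ m : ℕ, 0 < m → q ^ m ≠ 1)
    (hne : cEntry q r ≠ ⊥) :
    ∃ j0 : ℕ, cEntry q r = ((-(j0 : ℤ) : ℤ) : WithBot ℤ) ∧ q ^ j0 * r = 1 := by
  classical
  have hq1 : q ≠ 1 := by simpa using hq 1 one_pos
  have hqnum : ∀ m : ℕ, 0 < m → qnum m q ≠ 0 := by
    intro m hm
    rw [qnum, geom_sum_eq hq1]
    exact div_ne_zero (sub_ne_zero.mpr (hq m hm)) (sub_ne_zero.mpr hq1)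
  have hqfact : ∀ m : ℕ, qfact m q ≠ 0 := fun m =>
    Finset.prod_ne_zero_iff.mpr fun j _ => hqnum (j + 1) (Nat.succ_pos j)
  have hcond : ¬ (∀ m : ℕ, qfact m q * tfact m q r ≠ 0) := by
    intro h; exact hne (by rw [cEntry, if_pos h])
  have hcond' := hcond
  push_neg at hcond'
  obtain ⟨m0, hm0⟩ := hcond'
  have htf : tfact m0 q r = 0 := by
    rcases mul_eq_zero.mp hm0 with h | h
    · exact absurd h (hqfact m0)
    · exact h
  rw [tfact, Finset.prod_eq_zero_iff] at htf
  obtain ⟨j0, _, hj0⟩ := htf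
  have hj0' : q ^ j0 * r = 1 := by linear_combination -hj0
  refine ⟨j0, ?_, hj0'⟩
  have huniq : ∀ k : ℕ, q ^ k * r = 1 ↔ k = j0 := by
    intro k
    constructor
    · intro hk
      have hr0 : r ≠ 0 := by
        intro h; rw [h, mul_zero] at hk; exact one_ne_zero hk.symm
      apply pow_inj_of_nonroot hq0 hq
      have := hk.trans hj0'.symm
      exact mul_right_cancel₀ hr0 this
    · rintro rfl; exact hj0'
  have hset : {m : ℕ | qfact m q * tfact m q r ≠ 0} = Set.Iic j0 := by
    ext m
    simp only [Set.mem_setOf_eq, Set.mem_Iic, mul_ne_zero_iff]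
    constructor
    · intro ⟨_, htm⟩
      by_contra hm
      push_neg at hm
      apply htm
      rw [tfact, Finset.prod_eq_zero_iff]
      exact ⟨j0, Finset.mem_range.mpr hm, by linear_combination -hj0'⟩
    · intro hm
      refine ⟨hqfact m, ?_⟩
      rw [tfact]
      refine Finset.prod_ne_zero_iff.mpr fun k hk => ?_
      intro h
      have hk1 : q ^ k * r = 1 := by linear_combination -h
      have := (huniq k).mp hk1
      subst this
      exact absurd hm (by simpa using Finset.mem_range.mp hk)
  rw [cEntry, if_neg hcond, hset, csSup_Iic]

lemma sMap_alphav (χ : Mz N → Mz N → ℂˣ) (i j : Fin N) :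
    sMap χ i (alphav j) = alphav j - (cInt χ i j) • alphav i := by
  rw [sMap, alphav, Finsupp.sum_single_index] <;> simp

lemma cInt_self (χ : Mz N → Mz N → ℂˣ) (i : Fin N) : cInt χ i i = 2 := by
  rw [cInt, cMat, if_pos rfl]
  rfl

end Aux

/-- If χ(α_i,α_i) is not a root of unity and all c^χ_{jk} are finite, then i★χ ≡ χ:
same diagonal values and same products on pairs of simple roots. -/
theorem star_equiv_of_nonroot {N : ℕ} (χ : Mz N → Mz N → ℂˣ) (hχ : IsBihom χ) (i : Fin N)
    (hfin : ∀ j k : Fin N, cMat χ j k ≠ ⊥)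
    (hq : ∀ m : ℕ, 0 < m → (χ (alphav i) (alphav i) : ℂ) ^ m ≠ 1) :
    (∀ j : Fin N, starB i χ (alphav j) (alphav j) = χ (alphav j) (alphav j)) ∧
    (∀ j k : Fin N,
      (starB i χ (alphav j) (alphav k) : ℂ) * (starB i χ (alphav k) (alphav j) : ℂ) =
      (χ (alphav j) (alphav k) : ℂ) * (χ (alphav k) (alphav j) : ℂ)) := by
  set q : ℂ := (χ (alphav i) (alphav i) : ℂ) with hqdef
  have hq0 : q ≠ 0 := Units.ne_zero _
  -- the key relation: q_{ij} q_{ji} = q ^ c_{ij}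
  have hkey : ∀ j : Fin N,
      (χ (alphav i) (alphav j) : ℂ) * (χ (alphav j) (alphav i) : ℂ) = q ^ (cInt χ i j) := by
    intro j
    by_cases hij : i = j
    · subst hij
      rw [cInt_self]
      rw [show (2 : ℤ) = 1 + 1 from rfl, zpow_add₀ hq0, zpow_one]
    · have hc : cMat χ i j = cEntry q
          ((χ (alphav i) (alphav j) : ℂ) * (χ (alphav j) (alphav i) : ℂ)) := by
        rw [cMat, if_neg hij]
      obtain ⟨j0, hcv, hj0⟩ := cEntry_key hq0 hq (by rw [← hc]; exact hfin i j)
      have hcint : cInt χ i j = -(j0 : ℤ) := by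
        rw [cInt, hc, hcv, WithBot.unbotD_coe]
      rw [hcint, zpow_neg, zpow_natCast]
      field_simp
      linear_combination hj0
  -- values of starB on simple roots
  have hstar : ∀ j k : Fin N, (starB i χ (alphav j) (alphav k) : ℂ) =
      (χ (alphav j) (alphav k) : ℂ) * (χ (alphav j) (alphav i) : ℂ) ^ (-(cInt χ i k)) *
      (χ (alphav i) (alphav k) : ℂ) ^ (-(cInt χ i j)) * q ^ (cInt χ i j * cInt χ i k) := by
    intro j k
    rw [starB, sMap_alphav, sMap_alphav, chi_expand hχ]
  have hqq : ∀ j k : Fin N, q ^ (cInt χ i j * cInt χ i k) =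
      ((χ (alphav i) (alphav j) : ℂ) * (χ (alphav j) (alphav i) : ℂ)) ^ (cInt χ i k) := by
    intro j k
    rw [hkey j, ← zpow_mul]
  constructor
  · intro j
    apply Units.ext
    rw [hstar j j, hqq j j, mul_zpow]
    set x := (χ (alphav j) (alphav i) : ℂ)
    set y := (χ (alphav i) (alphav j) : ℂ)
    rw [zpow_neg, zpow_neg]
    set X := x ^ cInt χ i j with hX
    set Y := y ^ cInt χ i j with hY
    have hX0 : X ≠ 0 := zpow_ne_zero _ (Units.ne_zero _)
    have hY0 : Y ≠ 0 := zpow_ne_zero _ (Units.ne_zero _)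
    field_simp
  · intro j k
    rw [hstar j k, hstar k j, hqq j k, hqq k j, mul_zpow, mul_zpow]
    set a := (χ (alphav j) (alphav i) : ℂ)
    set b := (χ (alphav i) (alphav j) : ℂ)
    set c := (χ (alphav k) (alphav i) : ℂ)
    set d := (χ (alphav i) (alphav k) : ℂ)
    rw [zpow_neg, zpow_neg, zpow_neg, zpow_neg]
    set A := a ^ cInt χ i k with hA
    set B := b ^ cInt χ i k with hB
    set C := c ^ cInt χ i j with hC
    set D := d ^ cInt χ i j with hD
    have hA0 : A ≠ 0 := zpow_ne_zero _ (Units.ne_zero _)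
    have hB0 : B ≠ 0 := zpow_ne_zero _ (Units.ne_zero _)
    have hC0 : C ≠ 0 := zpow_ne_zero _ (Units.ne_zero _)
    have hD0 : D ≠ 0 := zpow_ne_zero _ (Units.ne_zero _)
    field_simp
end

section
/- In the algebra Ũ(χ), for all m ∈ N and i ∈ I, the commutator identity [Ẽ_i, F̃_i^m] = (m)_{q_{ii}} ( -K̃_{α_i} + q_{ii}^{-m+1} L̃_{α_i} ) F̃_i^{m-1} holds, where q_{ii} = χ(α_i, α_i). -/
/-- Generators of the algebra `Ũ(χ)`: `K̃_α, L̃_α (α ∈ ℤΠ)`, `Ẽ_i, F̃_i (i ∈ I)`. -/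
inductive Gen (N : ℕ)
  | K : Mz N → Gen N
  | L : Mz N → Gen N
  | E : Fin N → Gen N
  | F : Fin N → Gen N

/-- The free `ℂ`-algebra on the generators. -/
abbrev FA (N : ℕ) := FreeAlgebra ℂ (Gen N)

/-- Embedding of a generator into the free algebra. -/
noncomputable def gen {N : ℕ} (x : Gen N) : FA N := FreeAlgebra.ι ℂ x

/-- The defining relations of `Ũ(χ)`. -/
inductive URel {N : ℕ} (χ : Mz N → Mz N → ℂˣ) : FA N → FA N → Prop
  | K0 : URel χ (gen (Gen.K 0)) 1
  | L0 : URel χ (gen (Gen.L 0)) 1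
  | KK (a b : Mz N) : URel χ (gen (Gen.K a) * gen (Gen.K b)) (gen (Gen.K (a + b)))
  | LL (a b : Mz N) : URel χ (gen (Gen.L a) * gen (Gen.L b)) (gen (Gen.L (a + b)))
  | KL (a b : Mz N) : URel χ (gen (Gen.K a) * gen (Gen.L b)) (gen (Gen.L b) * gen (Gen.K a))
  | KE (a : Mz N) (i : Fin N) : URel χ (gen (Gen.K a) * gen (Gen.E i))
      ((χ a (alphav i) : ℂ) • (gen (Gen.E i) * gen (Gen.K a)))
  | LE (a : Mz N) (i : Fin N) : URel χ (gen (Gen.L a) * gen (Gen.E i))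
      ((χ (-alphav i) a : ℂ) • (gen (Gen.E i) * gen (Gen.L a)))
  | KF (a : Mz N) (i : Fin N) : URel χ (gen (Gen.K a) * gen (Gen.F i))
      ((χ a (-alphav i) : ℂ) • (gen (Gen.F i) * gen (Gen.K a)))
  | LF (a : Mz N) (i : Fin N) : URel χ (gen (Gen.L a) * gen (Gen.F i))
      ((χ (alphav i) a : ℂ) • (gen (Gen.F i) * gen (Gen.L a)))
  | EF (i j : Fin N) : URel χ (gen (Gen.E i) * gen (Gen.F j) - gen (Gen.F j) * gen (Gen.E i))
      (if i = j then -gen (Gen.K (alphav i)) + gen (Gen.L (alphav i)) else 0)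

/-- The algebra `Ũ(χ)`. -/
abbrev tU {N : ℕ} (χ : Mz N → Mz N → ℂˣ) := RingQuot (URel χ)

/-- `K̃_α` in `Ũ(χ)`. -/
noncomputable def elK {N : ℕ} (χ : Mz N → Mz N → ℂˣ) (a : Mz N) : tU χ :=
  RingQuot.mkAlgHom ℂ (URel χ) (gen (Gen.K a))

/-- `L̃_α` in `Ũ(χ)`. -/
noncomputable def elL {N : ℕ} (χ : Mz N → Mz N → ℂˣ) (a : Mz N) : tU χ :=
  RingQuot.mkAlgHom ℂ (URel χ) (gen (Gen.L a))

/-- `Ẽ_i` in `Ũ(χ)`. -/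
noncomputable def elE {N : ℕ} (χ : Mz N → Mz N → ℂˣ) (i : Fin N) : tU χ :=
  RingQuot.mkAlgHom ℂ (URel χ) (gen (Gen.E i))

/-- `F̃_i` in `Ũ(χ)`. -/
noncomputable def elF {N : ℕ} (χ : Mz N → Mz N → ℂˣ) (i : Fin N) : tU χ :=
  RingQuot.mkAlgHom ℂ (URel χ) (gen (Gen.F i))

/-- Iterated root vector `Ẽ⁺_{m,α_i,α_j}`. -/
noncomputable def Ep {N : ℕ} (χ : Mz N → Mz N → ℂˣ) (i j : Fin N) : ℕ → tU χ
  | 0 => elE χ j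
  | (m + 1) => elE χ i * Ep χ i j m -
      ((χ (alphav i) (alphav i) : ℂ) ^ m * (χ (alphav i) (alphav j) : ℂ)) •
        (Ep χ i j m * elE χ i)

/-- Iterated root vector `F̃⁺_{m,α_i,α_j}`. -/
noncomputable def Fp {N : ℕ} (χ : Mz N → Mz N → ℂˣ) (i j : Fin N) : ℕ → tU χ
  | 0 => elF χ j
  | (m + 1) => elF χ i * Fp χ i j m -
      ((χ (alphav i) (alphav i) : ℂ) ^ m * (χ (alphav j) (alphav i) : ℂ)) •
        (Fp χ i j m * elF χ i)


section Aux

variable {N : ℕ} (χ : Mz N → Mz N → ℂˣ)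

lemma aux_KF (a : Mz N) (i : Fin N) :
    elK χ a * elF χ i = (χ a (-alphav i) : ℂ) • (elF χ i * elK χ a) := by
  have h := RingQuot.mkAlgHom_rel ℂ (URel.KF (χ := χ) a i)
  simpa [elK, elF, map_mul] using h

lemma aux_LF (a : Mz N) (i : Fin N) :
    elL χ a * elF χ i = (χ (alphav i) a : ℂ) • (elF χ i * elL χ a) := by
  have h := RingQuot.mkAlgHom_rel ℂ (URel.LF (χ := χ) a i)
  simpa [elL, elF, map_mul] using h

lemma aux_EF (i : Fin N) :
    elE χ i * elF χ i - elF χ i * elE χ i = -elK χ (alphav i) + elL χ (alphav i) := by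
  have h := RingQuot.mkAlgHom_rel ℂ (URel.EF (χ := χ) i i)
  simpa [elE, elF, elK, elL, map_mul, map_sub, map_add, map_neg] using h

lemma chi_neg_right (hχ : IsBihom χ) (a b : Mz N) :
    (χ a (-b) : ℂ) = ((χ a b : ℂ))⁻¹ := by
  have h0 : χ a 0 = 1 := by
    have h : χ a 0 = χ a 0 * χ a 0 := by simpa using hχ.1 a 0 0
    exact left_eq_mul.mp h
  have h := hχ.1 a b (-b)
  rw [add_neg_cancel, h0] at h
  have h2 : χ a (-b) = (χ a b)⁻¹ := (inv_eq_of_mul_eq_one_right h.symm).symm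
  rw [h2]
  simp

lemma aux_FK (hχ : IsBihom χ) (i : Fin N) :
    elF χ i * elK χ (alphav i) =
      (χ (alphav i) (alphav i) : ℂ) • (elK χ (alphav i) * elF χ i) := by
  set q : ℂ := (χ (alphav i) (alphav i) : ℂ) with hqdef
  have hq : q ≠ 0 := Units.ne_zero _
  have h := aux_KF χ (alphav i) i
  rw [chi_neg_right χ hχ] at h
  rw [h, smul_smul, mul_inv_cancel₀ hq, one_smul]

lemma aux_FL (hχ : IsBihom χ) (i : Fin N) :
    elF χ i * elL χ (alphav i) =
      ((χ (alphav i) (alphav i) : ℂ))⁻¹ • (elL χ (alphav i) * elF χ i) := by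
  set q : ℂ := (χ (alphav i) (alphav i) : ℂ) with hqdef
  have hq : q ≠ 0 := Units.ne_zero _
  have h := aux_LF χ (alphav i) i
  rw [h, smul_smul, inv_mul_cancel₀ hq, one_smul]

lemma aux_FpowK (hχ : IsBihom χ) (i : Fin N) (m : ℕ) :
    elF χ i ^ m * elK χ (alphav i) =
      ((χ (alphav i) (alphav i) : ℂ)) ^ m • (elK χ (alphav i) * elF χ i ^ m) := by
  induction m with
  | zero => simp
  | succ n ih =>
    rw [pow_succ, mul_assoc, aux_FK χ hχ i, mul_smul_comm, ← mul_assoc, ih,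
      smul_mul_assoc, smul_smul, mul_assoc, ← pow_succ, pow_succ]
    ring_nf

lemma aux_FpowL (hχ : IsBihom χ) (i : Fin N) (m : ℕ) :
    elF χ i ^ m * elL χ (alphav i) =
      (((χ (alphav i) (alphav i) : ℂ))⁻¹) ^ m • (elL χ (alphav i) * elF χ i ^ m) := by
  induction m with
  | zero => simp
  | succ n ih =>
    rw [pow_succ, mul_assoc, aux_FL χ hχ i, mul_smul_comm, ← mul_assoc, ih,
      smul_mul_assoc, smul_smul, mul_assoc, ← pow_succ, pow_succ]
    ring_nf

lemma comm_step {R : Type*} [Ring R] (E F X : R) :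
    E * (X * F) - X * F * E = (E * X - X * E) * F + X * (E * F - F * E) := by
  noncomm_ring

end Aux

/-- In the algebra U~(chi): [E_i, F_i^m] = (m)_{q_ii} (-K_{a_i} + q_ii^{-m+1} L_{a_i}) F_i^{m-1}. -/
theorem commutator_E_Fpow {N : ℕ} (χ : Mz N → Mz N → ℂˣ) (hχ : IsBihom χ)
    (i : Fin N) (m : ℕ) (hm : 1 ≤ m) :
    elE χ i * elF χ i ^ m - elF χ i ^ m * elE χ i =
      qnum m (χ (alphav i) (alphav i)) •
        ((-elK χ (alphav i) +
          (((χ (alphav i) (alphav i) : ℂ))⁻¹ ^ (m - 1)) • elL χ (alphav i)) *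
          elF χ i ^ (m - 1)) := by
  set q : ℂ := (χ (alphav i) (alphav i) : ℂ) with hqdef
  have hq : q ≠ 0 := Units.ne_zero _
  induction m, hm using Nat.le_induction with
  | base =>
    simpa [qnum] using aux_EF χ i
  | succ m hm ih =>
    obtain ⟨n, rfl⟩ : ∃ n, m = n + 1 := ⟨m - 1, (Nat.succ_pred_eq_of_pos hm).symm⟩
    simp only [Nat.add_sub_cancel] at ih ⊢
    have step : elE χ i * elF χ i ^ (n + 2) - elF χ i ^ (n + 2) * elE χ i =
        (elE χ i * elF χ i ^ (n + 1) - elF χ i ^ (n + 1) * elE χ i) * elF χ i +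
          elF χ i ^ (n + 1) * (elE χ i * elF χ i - elF χ i * elE χ i) := by
      rw [pow_succ (n := n + 1)]
      exact comm_step (elE χ i) (elF χ i) (elF χ i ^ (n + 1))
    rw [step, ih, aux_EF χ i]
    have hneg1 : elF χ i ^ (n + 1) * (-elK χ (alphav i) + elL χ (alphav i)) =
        q ^ (n + 1) • (-elK χ (alphav i) * elF χ i ^ (n + 1)) +
          (q⁻¹) ^ (n + 1) • (elL χ (alphav i) * elF χ i ^ (n + 1)) := by
      have t1 : elF χ i ^ (n + 1) * (-elK χ (alphav i) + elL χ (alphav i)) =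
          elF χ i ^ (n + 1) * -elK χ (alphav i) + elF χ i ^ (n + 1) * elL χ (alphav i) :=
        mul_add _ _ _
      have t2 : elF χ i ^ (n + 1) * -elK χ (alphav i) =
          -(elF χ i ^ (n + 1) * elK χ (alphav i)) :=
        mul_neg (elF χ i ^ (n + 1)) (elK χ (alphav i))
      rw [t1, t2, aux_FpowK χ hχ i (n + 1), aux_FpowL χ hχ i (n + 1), ← hqdef]
      have t3 : -(q ^ (n + 1) • (elK χ (alphav i) * elF χ i ^ (n + 1))) =
          q ^ (n + 1) • (-elK χ (alphav i) * elF χ i ^ (n + 1)) :=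
        (smul_neg (q ^ (n + 1)) (elK χ (alphav i) * elF χ i ^ (n + 1))).symm.trans
          (congrArg (fun z => q ^ (n + 1) • z)
            (neg_mul (elK χ (alphav i)) (elF χ i ^ (n + 1))).symm)
      rw [t3]
    rw [hneg1]
    simp only [smul_mul_assoc, mul_assoc, ← pow_succ, add_mul]
    have s1 : qnum (n + 1) q + q ^ (n + 1) = qnum (n + 2) q := by
      rw [qnum, qnum, Finset.sum_range_succ _ (n + 1)]
    have s2 : qnum (n + 1) q * (q⁻¹) ^ n + (q⁻¹) ^ (n + 1) =
        qnum (n + 2) q * (q⁻¹) ^ (n + 1) := by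
      rw [qnum, qnum, geom_sum_succ (x := q) (n := n + 1)]
      field_simp
      linear_combination (norm := ring_nf) (-(∑ x ∈ Finset.range (n + 1), q ^ x) * q⁻¹ ^ n) * (mul_inv_cancel₀ hq)
    match_scalars
    · linear_combination s1
    · linear_combination s2
end
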